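/- Let φ : S^1 → R be a continuous function with 0 ≤ φ(z) ≤ 2w for all z ∈ S^1 (for some constant w ≥ 0), whose convex lower envelope φ^- satisfies φ^-(0,0) = 0. Let y = (tanh 1, 0) and let u = (u0, u1, u2) ∈ R^{1,2} satisfy: ⟨(1,η), u⟩_{1,2} ≤ φ^-(η) for all η in the closed disk, and ⟨(1,y), u⟩_{1,2} = φ^-(y) ≥ 0. Then |u0| ≤ 2 tanh(1)/(1 - tanh 1)·w, |u1| ≤ 2/(1 - tanh 1)·w, |u2| ≤ 2/(1 - tanh 1)·w, and hence √(-u0² + u1² + u2²) ≤ 2√2/(1 - tanh 1)·w whenever -u0² + u1² + u2² ≥ 0. -/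
import Mathlib


/-- The Minkowski bilinear form of signature `(-,+,+)` on `ℝ × ℝ × ℝ`. -/
def mink (x y : ℝ × ℝ × ℝ) : ℝ := -(x.1 * y.1) + x.2.1 * y.2.1 + x.2.2 * y.2.2

lemma tanh_one_pos : 0 < Real.tanh 1 := by
  rw [Real.tanh_eq_sinh_div_cosh]
  exact div_pos (Real.sinh_pos_iff.mpr one_pos) (Real.cosh_pos 1)

lemma tanh_one_lt_one : Real.tanh 1 < 1 := by
  rw [Real.tanh_eq_sinh_div_cosh]
  rw [div_lt_one (Real.cosh_pos 1)]
  exact Real.sinh_lt_cosh 1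

/-- Let `φ : S¹ → ℝ` be continuous with `0 ≤ φ ≤ 2w` on `S¹`, whose convex lower envelope
`φ⁻` (equal to `φ` on `S¹`) satisfies `φ⁻(0,0) = 0`.  Let `y = (tanh 1, 0)` and let
`u = (u₀,u₁,u₂) ∈ ℝ^{1,2}` satisfy `⟨(1,η), u⟩ ≤ φ⁻(η)` on the closed disk with
`⟨(1,y), u⟩ = φ⁻(y) ≥ 0`.  Then `|u₀| ≤ 2 tanh(1)/(1-tanh 1) · w`,
`|u₁| ≤ 2/(1-tanh 1) · w`, `|u₂| ≤ 2/(1-tanh 1) · w`, and hence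
`√(-u₀² + u₁² + u₂²) ≤ 2√2/(1-tanh 1) · w` whenever `-u₀² + u₁² + u₂² ≥ 0`. -/
theorem support_plane_coefficient_bounds (φ φm : ℝ × ℝ → ℝ) (w : ℝ) (hw : 0 ≤ w)
    (hcont : ContinuousOn φ {z : ℝ × ℝ | z.1 ^ 2 + z.2 ^ 2 = 1})
    (hφ : ∀ z : ℝ × ℝ, z.1 ^ 2 + z.2 ^ 2 = 1 → 0 ≤ φ z ∧ φ z ≤ 2 * w)
    (hbdry : ∀ z : ℝ × ℝ, z.1 ^ 2 + z.2 ^ 2 = 1 → φm z = φ z)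
    (h0 : φm (0, 0) = 0)
    (u : ℝ × ℝ × ℝ)
    (hsup : ∀ η : ℝ × ℝ, η.1 ^ 2 + η.2 ^ 2 ≤ 1 → mink (1, η.1, η.2) u ≤ φm η)
    (heq : mink (1, Real.tanh 1, 0) u = φm (Real.tanh 1, 0))
    (hpos : 0 ≤ φm (Real.tanh 1, 0)) :
    |u.1| ≤ 2 * Real.tanh 1 / (1 - Real.tanh 1) * w ∧
    |u.2.1| ≤ 2 / (1 - Real.tanh 1) * w ∧
    |u.2.2| ≤ 2 / (1 - Real.tanh 1) * w ∧
    (0 ≤ -u.1 ^ 2 + u.2.1 ^ 2 + u.2.2 ^ 2 →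
      Real.sqrt (-u.1 ^ 2 + u.2.1 ^ 2 + u.2.2 ^ 2) ≤
        2 * Real.sqrt 2 / (1 - Real.tanh 1) * w) := by
  obtain ⟨u0, u1, u2⟩ := u
  set t := Real.tanh 1 with ht
  have ht0 : 0 < t := tanh_one_pos
  have ht1 : t < 1 := tanh_one_lt_one
  have ht1' : 0 < 1 - t := by linarith
  simp only [mink] at *
  -- bound φm at boundary points by 2w
  have hb : ∀ z : ℝ × ℝ, z.1 ^ 2 + z.2 ^ 2 = 1 → φm z ≤ 2 * w := fun z hz => by
    rw [hbdry z hz]; exact (hφ z hz).2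
  have hA : -u0 ≤ 0 := by
    have h := hsup (0, 0) (by norm_num)
    have h0' : φm 0 = 0 := h0
    simp [h0'] at h
    linarith
  have hB : -u0 + u1 ≤ 2 * w := by
    have h1 := hsup (1, 0) (by norm_num)
    have h2 := hb (1, 0) (by norm_num)
    simp at h1; linarith
  have hC : -u0 - u1 ≤ 2 * w := by
    have h1 := hsup (-1, 0) (by norm_num)
    have h2 := hb (-1, 0) (by norm_num)
    simp at h1; linarith
  have hD1 : -u0 + u2 ≤ 2 * w := by
    have h1 := hsup (0, 1) (by norm_num)
    have h2 := hb (0, 1) (by norm_num)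
    simp at h1; linarith
  have hD2 : -u0 - u2 ≤ 2 * w := by
    have h1 := hsup (0, -1) (by norm_num)
    have h2 := hb (0, -1) (by norm_num)
    simp at h1; linarith
  have hE : 0 ≤ -u0 + t * u1 := by
    have : -(1 * u0) + t * u1 + 0 * u2 = φm (t, 0) := heq
    nlinarith
  -- u0 ≥ 0, t u1 ≥ u0
  have hu0 : 0 ≤ u0 := by linarith
  have htu1 : u0 ≤ t * u1 := by linarith
  have hu1pos : 0 ≤ u1 := nonneg_of_mul_nonneg_right (by linarith) ht0
  have hu1 : u1 ≤ 2 / (1 - t) * w := by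
    rw [div_mul_eq_mul_div, le_div_iff₀ ht1']
    nlinarith
  have hu0b : u0 ≤ 2 * t / (1 - t) * w := by
    rw [div_mul_eq_mul_div, le_div_iff₀ ht1']
    nlinarith
  have hkey2 : 2 * w + 2 * t / (1 - t) * w = 2 / (1 - t) * w := by
    field_simp
    ring
  have hu2 : |u2| ≤ 2 / (1 - t) * w := by
    rw [abs_le]
    constructor <;> linarith
  refine ⟨?_, ?_, hu2, ?_⟩
  · rw [abs_of_nonneg hu0]; exact hu0b
  · rw [abs_of_nonneg hu1pos]; exact hu1
  · intro hq
    have hkey : -u0 ^ 2 + u1 ^ 2 + u2 ^ 2 ≤ (2 * Real.sqrt 2 / (1 - t) * w) ^ 2 := by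
      have h2 : Real.sqrt 2 ^ 2 = 2 := Real.sq_sqrt (by norm_num)
      have habs : u2 ^ 2 ≤ (2 / (1 - t) * w) ^ 2 := by
        have := sq_abs u2 ▸ pow_le_pow_left₀ (abs_nonneg u2) hu2 2
        simpa [sq_abs] using this
      have hrw : 2 * Real.sqrt 2 / (1 - t) * w = Real.sqrt 2 * (2 / (1 - t) * w) := by ring
      have heq2 : (2 * Real.sqrt 2 / (1 - t) * w) ^ 2 = 2 * ((2 / (1 - t) * w) ^ 2) := by
        rw [hrw, mul_pow, h2]
      have habs1 : u1 ^ 2 ≤ (2 / (1 - t) * w) ^ 2 := by nlinarith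
      linarith [sq_nonneg u0]
    calc Real.sqrt (-u0 ^ 2 + u1 ^ 2 + u2 ^ 2)
        ≤ Real.sqrt ((2 * Real.sqrt 2 / (1 - t) * w) ^ 2) := Real.sqrt_le_sqrt hkey
      _ = 2 * Real.sqrt 2 / (1 - t) * w := Real.sqrt_sq (by positivity)
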